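/- Let 1 < p < ∞. The natural embedding of the Lebesgue sequence space ℓ_p into the weak Lebesgue sequence space ℓ_{p,∞} is strictly singular: for every infinite-dimensional closed linear subspace Z of ℓ_p, the infimum of ‖x‖_{p,∞} over all x ∈ Z with ‖x‖_p = 1 equals 0. -/

import Mathlib

set_option linter.unusedSectionVars false
set_option maxHeartbeats 1000000

open scoped ENNReal

noncomputable def rearrangement (f : ℕ → ℝ) (k : ℕ) : ℝ :=
  sInf {lam : ℝ | 0 ≤ lam ∧ {i : ℕ | lam < |f i|}.Finite ∧ {i : ℕ | lam < |f i|}.ncard ≤ k}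

noncomputable def weakNorm (p : ℝ) (f : ℕ → ℝ) : ℝ :=
  ⨆ k : ℕ, ((k : ℝ) + 1) ^ (1 / p) * rearrangement f k

lemma rpow_one_div_rpow (p : ℝ) (hp0 : 0 < p) (x : ℝ) (hx : 0 ≤ x) :
    (x ^ (1/p)) ^ p = x := by
  rw [← Real.rpow_mul hx, one_div, inv_mul_cancel₀ hp0.ne', Real.rpow_one]

lemma rearr_nonneg (f : ℕ → ℝ) (k : ℕ) : 0 ≤ rearrangement f k :=
  Real.sInf_nonneg (fun _ hx => hx.1)

lemma weakNorm_nonneg (p : ℝ) (f : ℕ → ℝ) : 0 ≤ weakNorm p f :=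
  Real.iSup_nonneg (fun k => mul_nonneg (Real.rpow_nonneg (by positivity) _) (rearr_nonneg f k))

lemma rearr_le (f : ℕ → ℝ) (k : ℕ) (lam : ℝ) (h0 : 0 ≤ lam)
    (hfin : {i : ℕ | lam < |f i|}.Finite) (hcard : {i : ℕ | lam < |f i|}.ncard ≤ k) :
    rearrangement f k ≤ lam :=
  csInf_le ⟨0, fun _ hx => hx.1⟩ ⟨h0, hfin, hcard⟩

lemma weakNorm_le (p : ℝ) (hp : 1 < p) (f : ℕ → ℝ) (ε : ℝ) (hε : 0 < ε)
    (h : ∀ lam : ℝ, 0 < lam → {i : ℕ | lam < |f i|}.Finite ∧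
      lam ^ p * ({i : ℕ | lam < |f i|}.ncard : ℝ) < ε ^ p) :
    weakNorm p f ≤ ε := by
  have hp0 : (0:ℝ) < p := lt_trans one_pos hp
  refine Real.iSup_le (fun k => ?_) hε.le
  have hk : (0:ℝ) < (k:ℝ) + 1 := by positivity
  set lam : ℝ := ε * (((k:ℝ)+1) ^ (1/p))⁻¹ with hlam
  have hkp : (0:ℝ) < ((k:ℝ)+1) ^ (1/p) := Real.rpow_pos_of_pos hk _
  have hlam0 : 0 < lam := by positivity
  obtain ⟨hfin, hcount⟩ := h lam hlam0
  -- lam ^ p = ε ^ p / ((k:ℝ)+1)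
  have hbase : (((k:ℝ)+1) ^ (1/p)) ^ p = (k:ℝ) + 1 := by
    rw [← Real.rpow_mul hk.le]
    rw [one_div, inv_mul_cancel₀ hp0.ne', Real.rpow_one]
  have hlp : lam ^ p = ε ^ p * (((k:ℝ)+1))⁻¹ := by
    rw [hlam, Real.mul_rpow hε.le (by positivity), Real.inv_rpow hkp.le, hbase]
  have hcard : ({i : ℕ | lam < |f i|}.ncard : ℝ) < (k:ℝ) + 1 := by
    rw [hlp] at hcount
    by_contra hcon
    push_neg at hcon
    have hA : (0:ℝ) < ε ^ p := Real.rpow_pos_of_pos hε p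
    have : ε ^ p ≤ ε ^ p * ((k:ℝ)+1)⁻¹ * ({i : ℕ | lam < |f i|}.ncard : ℝ) := by
      calc ε ^ p = ε ^ p * ((k:ℝ)+1)⁻¹ * ((k:ℝ)+1) := by field_simp
        _ ≤ _ := by gcongr
    linarith
  have hcardk : {i : ℕ | lam < |f i|}.ncard ≤ k := by
    exact_mod_cast Nat.lt_succ_iff.mp (by exact_mod_cast hcard)
  have := rearr_le f k lam hlam0.le hfin hcardk
  calc ((k:ℝ)+1) ^ (1/p) * rearrangement f k ≤ ((k:ℝ)+1) ^ (1/p) * lam := by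
        exact mul_le_mul_of_nonneg_left this hkp.le
    _ = ε := by
        rw [hlam]
        field_simp

section LpFacts

variable (p : ℝ)

local notation "P" => ENNReal.ofReal p
local notation "E" => lp (fun _ : ℕ => ℝ) (ENNReal.ofReal p)

lemma toReal_P (hp : 1 < p) : (ENNReal.ofReal p).toReal = p :=
  ENNReal.toReal_ofReal (le_of_lt (lt_trans one_pos hp))

variable [Fact (1 ≤ ENNReal.ofReal p)]

lemma summable_rpow (hp : 1 < p) (f : E) : Summable (fun i => ‖f i‖ ^ p) := by
  have h := (lp.memℓp f).summable (p := P) (by rw [toReal_P p hp]; linarith)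
  rwa [toReal_P p hp] at h

lemma norm_rpow (hp : 1 < p) (f : E) : ‖f‖ ^ p = ∑' i, ‖f i‖ ^ p := by
  have := lp.norm_rpow_eq_tsum (p := P) (by rw [toReal_P p hp]; linarith) f
  rwa [toReal_P p hp] at this

lemma finite_D (hp : 1 < p) (f : E) (lam : ℝ) (hlam : 0 < lam) :
    {i : ℕ | lam < |f i|}.Finite := by
  have h := (summable_rpow p hp f).tendsto_cofinite_zero
  have hev : ∀ᶠ i in Filter.cofinite, ‖f i‖ ^ p < lam ^ p := by
    have := h.eventually (gt_mem_nhds (Real.rpow_pos_of_pos hlam p))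
    exact this
  rw [Filter.eventually_cofinite] at hev
  refine hev.subset (fun i hi => ?_)
  simp only [Set.mem_setOf_eq, not_lt] at hi ⊢
  rw [Real.norm_eq_abs]
  exact Real.rpow_le_rpow hlam.le (le_of_lt hi) (by linarith)


lemma cheby (hp : 1 < p) (f : E) (lam : ℝ) (hlam : 0 < lam) :
    lam ^ p * ({i : ℕ | lam < |f i|}.ncard : ℝ) ≤ ‖f‖ ^ p := by
  have hfin := finite_D p hp f lam hlam
  have hcard : ({i : ℕ | lam < |f i|}.ncard : ℝ) = (hfin.toFinset.card : ℝ) := by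
    rw [Set.ncard_eq_toFinset_card _ hfin]
  rw [hcard, norm_rpow p hp f]
  calc lam ^ p * (hfin.toFinset.card : ℝ) = ∑ _i ∈ hfin.toFinset, lam ^ p := by
        rw [Finset.sum_const, nsmul_eq_mul, mul_comm]
    _ ≤ ∑ i ∈ hfin.toFinset, ‖f i‖ ^ p := by
        refine Finset.sum_le_sum (fun i hi => ?_)
        rw [Set.Finite.mem_toFinset] at hi
        rw [Real.norm_eq_abs]
        exact Real.rpow_le_rpow hlam.le (le_of_lt hi) (by linarith)
    _ ≤ ∑' i, ‖f i‖ ^ p := by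
        refine Summable.sum_le_tsum _ (fun i _ => by positivity) (summable_rpow p hp f)

lemma norm_add_pow (hp : 1 < p) (f g : E) (hdis : ∀ i, f i = 0 ∨ g i = 0) :
    ‖f + g‖ ^ p = ‖f‖ ^ p + ‖g‖ ^ p := by
  have hp0 : p ≠ 0 := by positivity
  rw [norm_rpow p hp, norm_rpow p hp, norm_rpow p hp]
  rw [← Summable.tsum_add (summable_rpow p hp f) (summable_rpow p hp g)]
  refine tsum_congr (fun i => ?_)
  have hcoe : (f + g : E) i = f i + g i := by
    rw [lp.coeFn_add]; rfl
  rw [hcoe]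
  rcases hdis i with h | h <;> rw [h] <;>
    simp [Real.zero_rpow hp0]

lemma norm_smul_pow (hp : 1 < p) (c : ℝ) (f : E) :
    ‖c • f‖ ^ p = |c| ^ p * ‖f‖ ^ p := by
  rw [norm_smul, Real.mul_rpow (norm_nonneg _) (norm_nonneg _), Real.norm_eq_abs]

lemma coords_smul (c : ℝ) (f : E) (i : ℕ) : (c • f : E) i = c * f i := by
  rw [lp.coeFn_smul]; rfl

lemma coords_add (f g : E) (i : ℕ) : (f + g : E) i = f i + g i := by
  rw [lp.coeFn_add]; rfl

/-- truncation -/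
noncomputable def trunc (f : E) (N : ℕ) : E := ∑ i ∈ Finset.range N, lp.single P i (f i)

lemma trunc_apply (f : E) (N j : ℕ) : (trunc p f N) j = if j < N then f j else 0 := by
  rw [trunc, lp.coeFn_sum, Finset.sum_apply]
  by_cases h : j < N
  · rw [if_pos h, Finset.sum_eq_single_of_mem j (Finset.mem_range.2 h)]
    · exact lp.single_apply_self P j _
    · intro b _ hbj
      exact lp.single_apply_ne P b _ (Ne.symm hbj)
  · rw [if_neg h]
    refine Finset.sum_eq_zero (fun b hb => ?_)
    have : b ≠ j := by
      intro hbj; rw [hbj] at hb; exact h (Finset.mem_range.1 hb)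
    exact lp.single_apply_ne P b _ (Ne.symm this)

lemma trunc_tail (hp : 1 < p) (f : E) (δ : ℝ) (hδ : 0 < δ) (n : ℕ) :
    ∃ N : ℕ, n ≤ N ∧ ‖f - trunc p f N‖ ≤ δ := by
  have hp0 : 0 < p := by positivity
  have hps : 0 < (ENNReal.ofReal p).toReal := by rw [toReal_P p hp]; positivity
  have hsum : HasSum (fun i => ‖f i‖ ^ p) (‖f‖ ^ p) := by
    rw [norm_rpow p hp f]
    exact ((summable_rpow p hp f).hasSum)
  have htend := hsum.tendsto_sum_nat
  rw [Metric.tendsto_atTop] at htend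
  obtain ⟨N₁, hN⟩ := htend (δ ^ p) (Real.rpow_pos_of_pos hδ p)
  set N := max N₁ n
  refine ⟨N, le_max_right _ _, ?_⟩
  have hkey := lp.norm_compl_sum_single (p := P) hps f (Finset.range N)
  rw [toReal_P p hp] at hkey
  have h2 : ‖f - trunc p f N‖ ^ p ≤ δ ^ p := by
    rw [trunc, hkey]
    have := hN N (le_max_left _ _)
    rw [Real.dist_eq, abs_lt] at this
    have hle : ∑ i ∈ Finset.range N, ‖f i‖ ^ p ≤ ‖f‖ ^ p := by
      refine Summable.sum_le_tsum _ (fun i _ => by positivity) (summable_rpow p hp f) |>.trans ?_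
      rw [norm_rpow p hp f]
    linarith [this.2]
  exact (Real.rpow_le_rpow_iff (norm_nonneg _) hδ.le hp0).1 h2

end LpFacts

section Blocks

variable (p : ℝ) [Fact (1 ≤ ENNReal.ofReal p)]

local notation "P" => ENNReal.ofReal p
local notation "E" => lp (fun _ : ℕ => ℝ) (ENNReal.ofReal p)

lemma head_zero (Z : Submodule ℝ E) (hZinf : ¬ FiniteDimensional ℝ Z) (n : ℕ) :
    ∃ x : E, x ∈ Z ∧ ‖x‖ = 1 ∧ ∀ i < n, x i = 0 := by
  classical
  let L : E →ₗ[ℝ] (Fin n → ℝ) :=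
    { toFun := fun f i => f i.val
      map_add' := by intro f g; funext i; exact coords_add p f g i.val
      map_smul' := by intro c f; funext i; exact coords_smul p c f i.val }
  let K := L.comp Z.subtype
  have hker : ∃ z : Z, z ≠ 0 ∧ K z = 0 := by
    by_contra hcon
    push_neg at hcon
    have hinj : Function.Injective K := by
      rw [← LinearMap.ker_eq_bot, LinearMap.ker_eq_bot']
      intro z hz
      by_contra hz0
      exact (hcon z hz0) hz
    exact hZinf (FiniteDimensional.of_injective K hinj)
  obtain ⟨z, hz0, hzK⟩ := hker
  have hzE : (z : E) ≠ 0 := fun h => hz0 (Subtype.ext h)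
  have hnz : ‖(z : E)‖ ≠ 0 := norm_ne_zero_iff.2 hzE
  refine ⟨‖(z : E)‖⁻¹ • (z : E), Z.smul_mem _ z.2, ?_, ?_⟩
  · rw [norm_smul, norm_inv, norm_norm, inv_mul_cancel₀ hnz]
  · intro i hi
    rw [coords_smul]
    have : (z : E) i = 0 := by
      have := congr_fun hzK ⟨i, hi⟩
      exact this
    rw [this, mul_zero]

/-- single near-Z block: supported in `[n, N)`, coords ≤ 1, norm in `[1-δ, 1]`. -/
lemma block (Z : Submodule ℝ E) (hZinf : ¬ FiniteDimensional ℝ Z) (hp : 1 < p)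
    (n : ℕ) (δ : ℝ) (hδ : 0 < δ) (hδ1 : δ < 1) :
    ∃ (w : E) (N : ℕ), n ≤ N ∧ (∀ i < n, w i = 0) ∧ (∀ i, N ≤ i → w i = 0) ∧
      (∀ i, |w i| ≤ 1) ∧ 1 - δ ≤ ‖w‖ ∧ ‖w‖ ≤ 1 ∧ (∃ z ∈ Z, ‖w - z‖ ≤ δ) := by
  obtain ⟨x, hxZ, hx1, hxhead⟩ := head_zero p Z hZinf n
  obtain ⟨N, hNn, hNle⟩ := trunc_tail p hp x δ hδ n
  refine ⟨trunc p x N, N, hNn, ?_, ?_, ?_, ?_, ?_, ⟨x, hxZ, ?_⟩⟩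
  · intro i hi
    rw [trunc_apply]
    by_cases h : i < N
    · rw [if_pos h]; exact hxhead i hi
    · rw [if_neg h]
  · intro i hi
    rw [trunc_apply, if_neg (by omega)]
  · intro i
    rw [trunc_apply]
    by_cases h : i < N
    · rw [if_pos h]
      calc |x i| = ‖x i‖ := (Real.norm_eq_abs _).symm
        _ ≤ ‖x‖ := lp.norm_apply_le_norm (by
            intro h0
            rw [ENNReal.ofReal_eq_zero] at h0
            linarith) x i
        _ = 1 := hx1
    · rw [if_neg h]; simp
  · calc 1 - δ = ‖x‖ - δ := by rw [hx1]
      _ ≤ ‖x‖ - ‖x - trunc p x N‖ := by linarith [hNle]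
      _ ≤ ‖trunc p x N‖ := by
          have := norm_sub_norm_le x (trunc p x N)
          linarith
  · -- upper bound on the norm of the truncation
    have hkey := lp.norm_compl_sum_single (p := P)
      (by rw [toReal_P p hp]; positivity : 0 < (ENNReal.ofReal p).toReal) x (Finset.range N)
    rw [toReal_P p hp] at hkey
    have hsum : ∑ i ∈ Finset.range N, ‖x i‖ ^ p ≤ ‖x‖ ^ p := by
      refine (Summable.sum_le_tsum _ (fun i _ => by positivity) (summable_rpow p hp x)).trans ?_
      rw [norm_rpow p hp x]
    have htr : ‖trunc p x N‖ ^ p = ∑ i ∈ Finset.range N, ‖x i‖ ^ p := by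
      have := lp.norm_sum_single (p := P)
        (by rw [toReal_P p hp]; positivity : 0 < (ENNReal.ofReal p).toReal)
        (fun i => (x i : ℝ)) (Finset.range N)
      rw [toReal_P p hp] at this
      exact this
    have : ‖trunc p x N‖ ^ p ≤ 1 ^ p := by
      rw [htr, Real.one_rpow]
      calc ∑ i ∈ Finset.range N, ‖x i‖ ^ p ≤ ‖x‖ ^ p := hsum
        _ = 1 := by rw [hx1, Real.one_rpow]
    exact (Real.rpow_le_rpow_iff (norm_nonneg _) one_pos.le (by positivity)).1 this
  · rw [norm_sub_rev]; exact hNle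

lemma flat (Z : Submodule ℝ E) (hZinf : ¬ FiniteDimensional ℝ Z) (hp : 1 < p)
    (n : ℕ) (δ : ℝ) (hδ : 0 < δ) (hδ1 : δ < 1) :
    ∀ m : ℕ, 1 ≤ m →
    ∃ (w : E) (N : ℕ), n ≤ N ∧ (∀ i < n, w i = 0) ∧ (∀ i, N ≤ i → w i = 0) ∧
      (∀ i, |w i| ≤ 1) ∧ (m : ℝ) * (1 - δ) ^ p ≤ ‖w‖ ^ p ∧ ‖w‖ ^ p ≤ (m : ℝ) ∧
      (∃ z ∈ Z, ‖w - z‖ ≤ (m : ℝ) * δ) := by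
  have hp0 : 0 < p := by positivity
  have h1δ : (0:ℝ) ≤ 1 - δ := by linarith
  have hblock_pow : ∀ (w : E), 1 - δ ≤ ‖w‖ → ‖w‖ ≤ 1 →
      (1 - δ) ^ p ≤ ‖w‖ ^ p ∧ ‖w‖ ^ p ≤ 1 := by
    intro w h1 h2
    constructor
    · exact Real.rpow_le_rpow h1δ h1 hp0.le
    · calc ‖w‖ ^ p ≤ 1 ^ p := Real.rpow_le_rpow (norm_nonneg _) h2 hp0.le
        _ = 1 := Real.one_rpow _
  intro m
  induction m with
  | zero => intro h; omega
  | succ m ih =>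
    intro _
    by_cases hm : 1 ≤ m
    · obtain ⟨w, N, hnN, hhead, htail, hsup, hlow, hhigh, z, hzZ, hzd⟩ := ih hm
      obtain ⟨w', N', hNN', hhead', htail', hsup', hlow', hhigh', z', hzZ', hzd'⟩ :=
        block p Z hZinf hp N δ hδ hδ1
      have hdis : ∀ i, w i = 0 ∨ w' i = 0 := by
        intro i
        by_cases h : i < N
        · exact Or.inr (hhead' i h)
        · exact Or.inl (htail i (by omega))
      obtain ⟨hl', hh'⟩ := hblock_pow w' hlow' hhigh'
      have hnormpow := norm_add_pow p hp w w' hdis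
      refine ⟨w + w', N', le_trans hnN hNN', ?_, ?_, ?_, ?_, ?_, ⟨z + z', Z.add_mem hzZ hzZ', ?_⟩⟩
      · intro i hi
        rw [coords_add, hhead i hi, hhead' i (by omega), add_zero]
      · intro i hi
        rw [coords_add, htail i (by omega), htail' i hi, add_zero]
      · intro i
        rw [coords_add]
        rcases hdis i with h | h
        · rw [h, zero_add]; exact hsup' i
        · rw [h, add_zero]; exact hsup i
      · rw [hnormpow]
        push_cast
        linarith
      · rw [hnormpow]
        push_cast
        linarith
      · have heq : (w + w') - (z + z') = (w - z) + (w' - z') := by abel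
        rw [heq]
        calc ‖(w - z) + (w' - z')‖ ≤ ‖w - z‖ + ‖w' - z'‖ := norm_add_le _ _
          _ ≤ (m:ℝ) * δ + δ := by linarith
          _ = ((m:ℝ)+1) * δ := by ring
          _ = ((m+1 : ℕ):ℝ) * δ := by push_cast; ring
    · -- m = 0, so m+1 = 1 : just one block
      have hm0 : m = 0 := by omega
      subst hm0
      obtain ⟨w, N, hnN, hhead, htail, hsup, hlow, hhigh, z, hzZ, hzd⟩ :=
        block p Z hZinf hp n δ hδ hδ1
      obtain ⟨hl, hh⟩ := hblock_pow w hlow hhigh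
      exact ⟨w, N, hnN, hhead, htail, hsup, by simpa using hl, by simpa using hh,
        z, hzZ, by simpa using hzd⟩

lemma flatv (Z : Submodule ℝ E) (hZinf : ¬ FiniteDimensional ℝ Z) (hp : 1 < p)
    (n : ℕ) (hn : 1 ≤ n) (δ : ℝ) (hδ : 0 < δ) (hδ1 : δ < 1) :
    ∃ (v : E) (N : ℕ), n ≤ N ∧ (∀ i < n, v i = 0) ∧ (∀ i, N ≤ i → v i = 0) ∧
      (∀ i, |v i| ≤ (((n:ℝ)) ^ (1/p))⁻¹) ∧ (1 - δ) ^ p ≤ ‖v‖ ^ p ∧ ‖v‖ ^ p ≤ 1 ∧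
      (∃ z ∈ Z, ‖v - z‖ ≤ (n:ℝ) * δ) := by
  have hp0 : 0 < p := by positivity
  have hn0 : (0:ℝ) < (n:ℝ) := by exact_mod_cast hn
  obtain ⟨w, N, hnN, hhead, htail, hsup, hlow, hhigh, z, hzZ, hzd⟩ :=
    flat p Z hZinf hp n δ hδ hδ1 n hn
  set c : ℝ := (((n:ℝ)) ^ (1/p))⁻¹ with hc
  have hcpos : 0 < c := by positivity
  have hc1 : c ≤ 1 := by
    rw [hc]
    have : (1:ℝ) ≤ ((n:ℝ)) ^ (1/p) := Real.one_le_rpow (by exact_mod_cast hn) (by positivity)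
    exact inv_le_one_of_one_le₀ this
  have hbase : (((n:ℝ)) ^ (1/p)) ^ p = (n:ℝ) := by
    rw [← Real.rpow_mul hn0.le, one_div, inv_mul_cancel₀ hp0.ne', Real.rpow_one]
  have hcp : |c| ^ p = ((n:ℝ))⁻¹ := by
    rw [abs_of_pos hcpos, hc, Real.inv_rpow (by positivity), hbase]
  refine ⟨c • w, N, hnN, ?_, ?_, ?_, ?_, ?_, ⟨c • z, Z.smul_mem c hzZ, ?_⟩⟩
  · intro i hi; rw [coords_smul, hhead i hi, mul_zero]
  · intro i hi; rw [coords_smul, htail i hi, mul_zero]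
  · intro i
    rw [coords_smul, abs_mul, abs_of_pos hcpos]
    calc c * |w i| ≤ c * 1 := by
          exact mul_le_mul_of_nonneg_left (hsup i) hcpos.le
      _ = c := mul_one c
  · rw [norm_smul_pow p hp, hcp]
    have : (1 - δ) ^ p = ((n:ℝ))⁻¹ * ((n:ℝ) * (1 - δ) ^ p) := by
      field_simp
    rw [this]
    exact mul_le_mul_of_nonneg_left hlow (by positivity)
  · rw [norm_smul_pow p hp, hcp]
    calc ((n:ℝ))⁻¹ * ‖w‖ ^ p ≤ ((n:ℝ))⁻¹ * (n:ℝ) := by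
          exact mul_le_mul_of_nonneg_left hhigh (by positivity)
      _ = 1 := inv_mul_cancel₀ hn0.ne'
  · rw [← smul_sub, norm_smul, Real.norm_eq_abs, abs_of_pos hcpos]
    calc c * ‖w - z‖ ≤ 1 * ((n:ℝ) * δ) := by
          apply mul_le_mul hc1 hzd (norm_nonneg _) one_pos.le
      _ = (n:ℝ) * δ := one_mul _

lemma main_rec (Z : Submodule ℝ E) (hZinf : ¬ FiniteDimensional ℝ Z) (hp : 1 < p) :
    ∀ k : ℕ, ∀ σ : ℝ, 0 < σ → σ ≤ 1 →
    ∃ (y : E) (n : ℕ), 1 ≤ n ∧ ‖y‖ = 1 ∧ (∀ i, n ≤ i → y i = 0) ∧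
      (∃ z ∈ Z, ‖y - z‖ ≤ σ) ∧
      ∀ lam : ℝ, 0 < lam →
        lam ^ p * ({i : ℕ | lam < |y i|}.ncard : ℝ) ≤ 4 / ((k:ℝ) + 4) := by
  have hp0 : 0 < p := by positivity
  intro k
  induction k with
  | zero =>
    intro σ hσ hσ1
    set δ : ℝ := min (σ/4) (1/2) with hδdef
    have hδ : 0 < δ := by positivity
    have hδ1 : δ < 1 := lt_of_le_of_lt (min_le_right _ _) (by norm_num)
    obtain ⟨w, N, _, _, htail, _, hlow, hhigh, z, hzZ, hzd⟩ :=
      block p Z hZinf hp 0 δ hδ hδ1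
    have hwpos : (0:ℝ) < ‖w‖ := by
      have : (1:ℝ)/2 ≤ ‖w‖ := by
        have : δ ≤ 1/2 := min_le_right _ _
        linarith
      linarith
    set y : E := ‖w‖⁻¹ • w with hy
    have hy1 : ‖y‖ = 1 := by
      rw [hy, norm_smul, norm_inv, norm_norm, inv_mul_cancel₀ hwpos.ne']
    refine ⟨y, max N 1, le_max_right _ _, hy1, ?_, ⟨‖w‖⁻¹ • z, Z.smul_mem _ hzZ, ?_⟩, ?_⟩
    · intro i hi
      rw [hy, coords_smul, htail i (le_trans (le_max_left _ _) hi), mul_zero]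
    · rw [hy, ← smul_sub, norm_smul, norm_inv, norm_norm]
      have hwinv : ‖w‖⁻¹ ≤ 2 := by
        rw [inv_le_comm₀ hwpos (by norm_num)]
        have : δ ≤ 1/2 := min_le_right _ _
        linarith
      calc ‖w‖⁻¹ * ‖w - z‖ ≤ 2 * δ := by
            apply mul_le_mul hwinv hzd (norm_nonneg _) (by norm_num)
        _ ≤ σ := by
            have : δ ≤ σ/4 := min_le_left _ _
            linarith
    · intro lam hlam
      have := cheby p hp y lam hlam
      rw [hy1, Real.one_rpow] at this
      have h40 : (4:ℝ) / (((0:ℕ):ℝ) + 4) = 1 := by norm_num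
      rw [h40]
      exact this
  | succ k ih =>
    intro σ hσ hσ1
    obtain ⟨y, n, hn1, hy1, hytail, ⟨zy, hzyZ, hzyd⟩, hyD⟩ := ih (σ/2) (by positivity) (by linarith)
    set Gk : ℝ := 4 / ((k:ℝ) + 4) with hGk
    have hk4 : (0:ℝ) < (k:ℝ) + 4 := by positivity
    have hGkpos : 0 < Gk := by rw [hGk]; positivity
    have hGk1 : Gk ≤ 1 := by
      rw [hGk, div_le_one hk4]; linarith [show (0:ℝ) ≤ (k:ℝ) from by positivity]
    set e : ℝ := Gk / 2 with he
    have hepos : 0 < e := by positivity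
    have he1 : e ≤ 1 := by rw [he]; linarith
    set ε : ℝ := e ^ (1/p) with hε
    have hεpos : 0 < ε := Real.rpow_pos_of_pos hepos _
    have hεp : ε ^ p = e := by
      rw [hε, ← Real.rpow_mul hepos.le, one_div, inv_mul_cancel₀ hp0.ne', Real.rpow_one]
    have hε1 : ε ≤ 1 := by
      rw [hε]
      exact Real.rpow_le_one hepos.le he1 (by positivity)
    have hhalf : ((1:ℝ)/2) ^ (1/p) < 1 :=
      Real.rpow_lt_one (by norm_num) (by norm_num) (by positivity)
    set δ : ℝ := min (σ/(4*(n:ℝ))) (1 - ((1:ℝ)/2) ^ (1/p)) with hδdef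
    have hn0 : (0:ℝ) < (n:ℝ) := by exact_mod_cast hn1
    have hδ : 0 < δ := lt_min (by positivity) (by linarith)
    have hδ1 : δ < 1 := by
      have : δ ≤ 1 - ((1:ℝ)/2) ^ (1/p) := min_le_right _ _
      have h2 : (0:ℝ) < ((1:ℝ)/2) ^ (1/p) := Real.rpow_pos_of_pos (by norm_num) _
      linarith
    obtain ⟨v, N, hnN, hvhead, hvtail, hvsup, hvlow, hvhigh, zv, hzvZ, hzvd⟩ :=
      flatv p Z hZinf hp n hn1 δ hδ hδ1
    have hvlow2 : (1:ℝ)/2 ≤ ‖v‖ ^ p := by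
      refine le_trans ?_ hvlow
      have hδle : δ ≤ 1 - ((1:ℝ)/2) ^ (1/p) := min_le_right _ _
      have : ((1:ℝ)/2) ^ (1/p) ≤ 1 - δ := by linarith
      calc (1:ℝ)/2 = (((1:ℝ)/2) ^ (1/p)) ^ p :=
            (rpow_one_div_rpow p hp0 _ (by norm_num)).symm
        _ ≤ (1 - δ) ^ p := by
            apply Real.rpow_le_rpow (by positivity) this hp0.le
    -- disjointness of y and ε • v
    have hdis : ∀ i, y i = 0 ∨ (ε • v : E) i = 0 := by
      intro i
      by_cases h : i < n
      · exact Or.inr (by rw [coords_smul, hvhead i h, mul_zero])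
      · exact Or.inl (hytail i (by omega))
    set y₁ : E := y + ε • v with hy₁
    have hS : ‖y₁‖ ^ p = 1 + e * ‖v‖ ^ p := by
      rw [hy₁, norm_add_pow p hp y (ε • v) hdis, norm_smul_pow p hp, hy1, Real.one_rpow,
        abs_of_pos hεpos, hεp]
    have hSlow : 1 + e/2 ≤ ‖y₁‖ ^ p := by
      rw [hS]; nlinarith
    have hShigh : ‖y₁‖ ^ p ≤ 1 + e := by
      rw [hS]; nlinarith
    have hc1 : 1 ≤ ‖y₁‖ := by
      have h1 : (1:ℝ) ^ p ≤ ‖y₁‖ ^ p := by rw [Real.one_rpow]; linarith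
      exact (Real.rpow_le_rpow_iff one_pos.le (norm_nonneg _) hp0).1 h1
    have hcpos : (0:ℝ) < ‖y₁‖ := by linarith
    set y₂ : E := ‖y₁‖⁻¹ • y₁ with hy₂
    have hy₂1 : ‖y₂‖ = 1 := by
      rw [hy₂, norm_smul, norm_inv, norm_norm, inv_mul_cancel₀ hcpos.ne']
    refine ⟨y₂, max n N + 1, by omega, hy₂1, ?_, ?_, ?_⟩
    · intro i hi
      rw [hy₂, coords_smul, hy₁, coords_add, hytail i (by omega), coords_smul,
        hvtail i (by omega), mul_zero, add_zero, mul_zero]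
    · refine ⟨‖y₁‖⁻¹ • (zy + ε • zv), Z.smul_mem _ (Z.add_mem hzyZ (Z.smul_mem _ hzvZ)), ?_⟩
      have heq : y₂ - ‖y₁‖⁻¹ • (zy + ε • zv) = ‖y₁‖⁻¹ • ((y - zy) + ε • (v - zv)) := by
        rw [hy₂, hy₁, ← smul_sub]
        congr 1
        rw [smul_sub]
        abel
      rw [heq, norm_smul, norm_inv, norm_norm]
      have hinv1 : ‖y₁‖⁻¹ ≤ 1 := by
        rw [inv_le_one_iff₀]; right; exact hc1
      have hd2 : ‖(y - zy) + ε • (v - zv)‖ ≤ σ/2 + σ/4 := by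
        calc ‖(y - zy) + ε • (v - zv)‖ ≤ ‖y - zy‖ + ‖ε • (v - zv)‖ := norm_add_le _ _
          _ ≤ σ/2 + σ/4 := by
              have h3 : ‖ε • (v - zv)‖ = ε * ‖v - zv‖ := by
                rw [norm_smul, Real.norm_eq_abs, abs_of_pos hεpos]
              have h4 : (n:ℝ) * δ ≤ σ/4 := by
                have : δ ≤ σ/(4*(n:ℝ)) := min_le_left _ _
                calc (n:ℝ) * δ ≤ (n:ℝ) * (σ/(4*(n:ℝ))) := by
                      exact mul_le_mul_of_nonneg_left this hn0.le
                  _ = σ/4 := by field_simp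
              have h5 : ‖ε • (v - zv)‖ ≤ σ/4 := by
                rw [h3]
                calc ε * ‖v - zv‖ ≤ 1 * (σ/4) := by
                      apply mul_le_mul hε1 (le_trans hzvd h4) (norm_nonneg _) one_pos.le
                  _ = σ/4 := one_mul _
              linarith
      calc ‖y₁‖⁻¹ * ‖(y - zy) + ε • (v - zv)‖ ≤ 1 * (σ/2 + σ/4) := by
            apply mul_le_mul hinv1 hd2 (norm_nonneg _) one_pos.le
        _ ≤ σ := by linarith
    · -- the distribution bound
      intro lam hlam
      set c : ℝ := ‖y₁‖ with hcdef
      set μ : ℝ := lam * c with hμ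
      have hμpos : 0 < μ := mul_pos hlam hcpos
      have hset : {i : ℕ | lam < |y₂ i|} = {i : ℕ | μ < |y₁ i|} := by
        ext i
        simp only [Set.mem_setOf_eq]
        rw [hy₂, coords_smul, abs_mul, abs_inv, abs_of_pos hcpos, hμ]
        rw [mul_comm lam c, ← lt_div_iff₀' hcpos]
        rw [div_eq_inv_mul]
      have hsub : {i : ℕ | μ < |y₁ i|} ⊆ {i : ℕ | μ < |y i|} ∪ {i : ℕ | μ < |(ε • v : E) i|} := by
        intro i hi
        simp only [Set.mem_setOf_eq, Set.mem_union] at hi ⊢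
        rw [hy₁, coords_add] at hi
        rcases hdis i with h | h
        · right; rwa [h, zero_add] at hi
        · left; rwa [h, add_zero] at hi
      have hfin1 := finite_D p hp y μ hμpos
      have hfin2 := finite_D p hp (ε • v) μ hμpos
      have hcount : ({i : ℕ | μ < |y₁ i|}.ncard : ℝ) ≤
          ({i : ℕ | μ < |y i|}.ncard : ℝ) + ({i : ℕ | μ < |(ε • v : E) i|}.ncard : ℝ) := by
        have h1 : {i : ℕ | μ < |y₁ i|}.ncard ≤
            ({i : ℕ | μ < |y i|} ∪ {i : ℕ | μ < |(ε • v : E) i|}).ncard :=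
          Set.ncard_le_ncard hsub (hfin1.union hfin2)
        have h2 := Set.ncard_union_le {i : ℕ | μ < |y i|} {i : ℕ | μ < |(ε • v : E) i|}
        exact_mod_cast le_trans h1 h2
      -- core bound : μ ^ p * d_{y₁}(μ) ≤ Gk
      have hcore : μ ^ p * ({i : ℕ | μ < |y₁ i|}.ncard : ℝ) ≤ Gk := by
        by_cases hcase : ε * (((n:ℝ)) ^ (1/p))⁻¹ ≤ μ
        · -- the small-scale part is empty
          have hempty : {i : ℕ | μ < |(ε • v : E) i|} = ∅ := by
            ext i
            simp only [Set.mem_setOf_eq, Set.mem_empty_iff_false, iff_false, not_lt]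
            rw [coords_smul, abs_mul, abs_of_pos hεpos]
            calc ε * |v i| ≤ ε * (((n:ℝ)) ^ (1/p))⁻¹ := by
                  exact mul_le_mul_of_nonneg_left (hvsup i) hεpos.le
              _ ≤ μ := hcase
          have : ({i : ℕ | μ < |y₁ i|}.ncard : ℝ) ≤ ({i : ℕ | μ < |y i|}.ncard : ℝ) := by
            rw [hempty] at hcount
            simpa using hcount
          calc μ ^ p * ({i : ℕ | μ < |y₁ i|}.ncard : ℝ)
              ≤ μ ^ p * ({i : ℕ | μ < |y i|}.ncard : ℝ) := by
                exact mul_le_mul_of_nonneg_left this (by positivity)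
            _ ≤ Gk := hyD μ hμpos
        · push_neg at hcase
          -- μ < ε * n^{-1/p}
          have hbound1 : μ ^ p * ({i : ℕ | μ < |y i|}.ncard : ℝ) ≤ e := by
            have hsubn : {i : ℕ | μ < |y i|} ⊆ Finset.range n := by
              intro i hi
              simp only [Set.mem_setOf_eq] at hi
              simp only [Finset.coe_range, Set.mem_Iio]
              by_contra h
              rw [hytail i (by omega)] at hi
              simp at hi
              linarith
            have hcard : ({i : ℕ | μ < |y i|}.ncard : ℝ) ≤ (n:ℝ) := by
              have := Set.ncard_le_ncard hsubn (Finset.range n).finite_toSet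
              rw [Set.ncard_coe_finset, Finset.card_range] at this
              exact_mod_cast this
            have hμp : μ ^ p < ε ^ p * (((n:ℝ)) ^ (1/p))⁻¹ ^ p := by
              rw [← Real.mul_rpow hεpos.le (by positivity)]
              exact Real.rpow_lt_rpow hμpos.le hcase hp0
            have hninv : (((n:ℝ)) ^ (1/p))⁻¹ ^ p = ((n:ℝ))⁻¹ := by
              rw [Real.inv_rpow (by positivity), ← Real.rpow_mul hn0.le, one_div,
                inv_mul_cancel₀ hp0.ne', Real.rpow_one]
            rw [hninv, hεp] at hμp
            calc μ ^ p * ({i : ℕ | μ < |y i|}.ncard : ℝ) ≤ μ ^ p * (n:ℝ) := by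
                  exact mul_le_mul_of_nonneg_left hcard (by positivity)
              _ ≤ e * ((n:ℝ))⁻¹ * (n:ℝ) := by
                  apply mul_le_mul_of_nonneg_right (le_of_lt hμp) hn0.le
              _ = e := by field_simp
          have hbound2 : μ ^ p * ({i : ℕ | μ < |(ε • v : E) i|}.ncard : ℝ) ≤ e := by
            calc μ ^ p * ({i : ℕ | μ < |(ε • v : E) i|}.ncard : ℝ) ≤ ‖(ε • v : E)‖ ^ p := by
                  exact cheby p hp (ε • v) μ hμpos
              _ = ε ^ p * ‖v‖ ^ p := by
                  rw [norm_smul_pow p hp, abs_of_pos hεpos]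
              _ ≤ e := by
                  rw [hεp]
                  nlinarith [hvhigh]
          calc μ ^ p * ({i : ℕ | μ < |y₁ i|}.ncard : ℝ)
              ≤ μ ^ p * (({i : ℕ | μ < |y i|}.ncard : ℝ) +
                ({i : ℕ | μ < |(ε • v : E) i|}.ncard : ℝ)) := by
                exact mul_le_mul_of_nonneg_left hcount (by positivity)
            _ = μ ^ p * ({i : ℕ | μ < |y i|}.ncard : ℝ) +
                μ ^ p * ({i : ℕ | μ < |(ε • v : E) i|}.ncard : ℝ) := by ring
            _ ≤ e + e := add_le_add hbound1 hbound2
            _ = Gk := by rw [he]; ring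
      -- conclude
      have hcp : c ^ p = ‖y₁‖ ^ p := rfl
      have hlamp : lam ^ p = μ ^ p / c ^ p := by
        rw [hμ, Real.mul_rpow hlam.le hcpos.le]
        field_simp [(Real.rpow_pos_of_pos hcpos p).ne']
      rw [hset, hlamp]
      have hcplow : (1:ℝ) + e/2 ≤ c ^ p := hSlow
      have hcppos : (0:ℝ) < c ^ p := Real.rpow_pos_of_pos hcpos p
      have hfin : (0:ℝ) ≤ ({i : ℕ | μ < |y₁ i|}.ncard : ℝ) := by positivity
      calc μ ^ p / c ^ p * ({i : ℕ | μ < |y₁ i|}.ncard : ℝ)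
          = (μ ^ p * ({i : ℕ | μ < |y₁ i|}.ncard : ℝ)) / c ^ p := by ring
        _ ≤ Gk / (1 + e/2) := by
            apply div_le_div₀ hGkpos.le hcore (by positivity) hcplow
        _ ≤ 4 / (((k+1:ℕ):ℝ) + 4) := by
            have hkk : Gk / (1 + e/2) = 4 / ((k:ℝ) + 5) := by
              rw [he, hGk]
              have h5 : ((k:ℝ) + 5) ≠ 0 := by positivity
              field_simp
              ring
            rw [hkk]
            apply le_of_eq
            congr 1
            push_cast
            ring

end Blocks

theorem embedding_lp_weak_lp_strictly_singular (p : ℝ) (hp : 1 < p)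
    [Fact (1 ≤ ENNReal.ofReal p)]
    (Z : Submodule ℝ (lp (fun _ : ℕ => ℝ) (ENNReal.ofReal p)))
    (hZclosed : IsClosed (Z : Set (lp (fun _ : ℕ => ℝ) (ENNReal.ofReal p))))
    (hZinf : ¬ FiniteDimensional ℝ Z) :
    sInf {r : ℝ | ∃ x ∈ Z, ‖x‖ = 1 ∧ weakNorm p (⇑x) = r} = 0 := by
  have hp0 : (0:ℝ) < p := by positivity
  set S := {r : ℝ | ∃ x ∈ Z, ‖x‖ = 1 ∧ weakNorm p (⇑x) = r} with hS
  -- main claim : for all t > 0 there is r ∈ S with r ≤ t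
  have hmain : ∀ t : ℝ, 0 < t → ∃ r ∈ S, r ≤ t := by
    intro t ht
    have h2p : (0:ℝ) < (2:ℝ) ^ p := Real.rpow_pos_of_pos two_pos p
    have htp : (0:ℝ) < t ^ p := Real.rpow_pos_of_pos ht p
    obtain ⟨k, hk⟩ := exists_nat_ge (16 * (2:ℝ) ^ p / t ^ p)
    have hk4 : (0:ℝ) < (k:ℝ) + 4 := by positivity
    have hkbound : (2:ℝ) ^ p * (4 / ((k:ℝ) + 4)) ≤ t ^ p / 4 := by
      have h1 : 16 * (2:ℝ) ^ p / t ^ p ≤ (k:ℝ) + 4 := by linarith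
      rw [div_le_iff₀ htp] at h1
      rw [← mul_div_assoc, div_le_div_iff₀ hk4 (by norm_num : (0:ℝ) < 4)]
      nlinarith
    set σ : ℝ := min (1/2) (t/8) with hσdef
    have hσ : 0 < σ := lt_min (by norm_num) (by positivity)
    have hσ1 : σ ≤ 1 := le_trans (min_le_left _ _) (by norm_num)
    obtain ⟨y, n, hn1, hy1, hytail, ⟨z, hzZ, hzd⟩, hyD⟩ := main_rec p Z hZinf hp k σ hσ hσ1
    have hzge : 1 - σ ≤ ‖z‖ := by
      have := norm_sub_norm_le y z
      rw [hy1] at this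
      linarith
    have hzpos : (0:ℝ) < ‖z‖ := by
      have : σ ≤ 1/2 := min_le_left _ _
      linarith
    set x : lp (fun _ : ℕ => ℝ) (ENNReal.ofReal p) := ‖z‖⁻¹ • z with hx
    have hxZ : x ∈ Z := Z.smul_mem _ hzZ
    have hx1 : ‖x‖ = 1 := by
      rw [hx, norm_smul, norm_inv, norm_norm, inv_mul_cancel₀ hzpos.ne']
    have hzle : ‖z‖ ≤ 1 + σ := by
      have := norm_sub_norm_le z y
      rw [hy1, norm_sub_rev] at this
      linarith
    have hxz : ‖x - z‖ ≤ σ := by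
      have heq : x - z = (‖z‖⁻¹ - 1) • z := by rw [sub_smul, one_smul, hx]
      rw [heq, norm_smul, Real.norm_eq_abs]
      have h1 : |‖z‖⁻¹ - 1| * ‖z‖ = |1 - ‖z‖| := by
        rw [← abs_of_pos hzpos, ← abs_mul, abs_of_pos hzpos]
        rw [sub_mul, one_mul, inv_mul_cancel₀ hzpos.ne', abs_sub_comm]
      rw [h1, abs_le]
      constructor <;> linarith
    have hxy : ‖x - y‖ ≤ 2 * σ := by
      calc ‖x - y‖ = ‖(x - z) + (z - y)‖ := by congr 1; abel
        _ ≤ ‖x - z‖ + ‖z - y‖ := norm_add_le _ _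
        _ ≤ σ + σ := add_le_add hxz (by rw [norm_sub_rev]; exact hzd)
        _ = 2 * σ := by ring
    -- distribution bound for x
    have hxD : ∀ lam : ℝ, 0 < lam →
        lam ^ p * ({i : ℕ | lam < |x i|}.ncard : ℝ) < t ^ p := by
      intro lam hlam
      have hl2 : 0 < lam / 2 := by positivity
      have hsub : {i : ℕ | lam < |x i|} ⊆
          {i : ℕ | lam/2 < |y i|} ∪ {i : ℕ | lam/2 < |(x - y : lp (fun _ : ℕ => ℝ) (ENNReal.ofReal p)) i|} := by
        intro i hi
        simp only [Set.mem_setOf_eq, Set.mem_union] at hi ⊢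
        by_contra hcon
        push_neg at hcon
        obtain ⟨h1, h2⟩ := hcon
        have hxi : x i = y i + (x - y : lp (fun _ : ℕ => ℝ) (ENNReal.ofReal p)) i := by
          rw [lp.coeFn_sub, Pi.sub_apply]; ring
        have : |x i| ≤ |y i| + |(x - y : lp (fun _ : ℕ => ℝ) (ENNReal.ofReal p)) i| := by
          rw [hxi]; exact abs_add_le _ _
        linarith
      have hfin1 := finite_D p hp y (lam/2) hl2
      have hfin2 := finite_D p hp (x - y) (lam/2) hl2
      have hcount : ({i : ℕ | lam < |x i|}.ncard : ℝ) ≤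
          ({i : ℕ | lam/2 < |y i|}.ncard : ℝ) +
          ({i : ℕ | lam/2 < |(x - y : lp (fun _ : ℕ => ℝ) (ENNReal.ofReal p)) i|}.ncard : ℝ) := by
        have h1 := Set.ncard_le_ncard hsub (hfin1.union hfin2)
        have h2 := Set.ncard_union_le {i : ℕ | lam/2 < |y i|}
          {i : ℕ | lam/2 < |(x - y : lp (fun _ : ℕ => ℝ) (ENNReal.ofReal p)) i|}
        exact_mod_cast le_trans h1 h2
      have hlamp : lam ^ p = 2 ^ p * (lam/2) ^ p := by
        rw [← Real.mul_rpow two_pos.le hl2.le]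
        congr 1
        ring
      have hb1 : (lam/2) ^ p * ({i : ℕ | lam/2 < |y i|}.ncard : ℝ) ≤ 4 / ((k:ℝ) + 4) :=
        hyD (lam/2) hl2
      have hb2 : (lam/2) ^ p *
          ({i : ℕ | lam/2 < |(x - y : lp (fun _ : ℕ => ℝ) (ENNReal.ofReal p)) i|}.ncard : ℝ) ≤
          (2 * σ) ^ p := by
        calc _ ≤ ‖(x - y : lp (fun _ : ℕ => ℝ) (ENNReal.ofReal p))‖ ^ p := cheby p hp _ (lam/2) hl2
          _ ≤ (2 * σ) ^ p := Real.rpow_le_rpow (norm_nonneg _) hxy hp0.le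
      have hσt : (2:ℝ) ^ p * (2 * σ) ^ p ≤ t ^ p / 2 := by
        rw [← Real.mul_rpow two_pos.le (by positivity)]
        have h4σ : (2:ℝ) * (2 * σ) = 4 * σ := by ring
        have hσ8 : σ ≤ t/8 := min_le_right _ _
        have h1 : (2:ℝ) * (2 * σ) ≤ t/2 := by linarith
        calc ((2:ℝ) * (2 * σ)) ^ p ≤ (t/2) ^ p :=
              Real.rpow_le_rpow (by positivity) h1 hp0.le
          _ = t ^ p * (1/2) ^ p := by
              rw [← Real.mul_rpow ht.le (by norm_num)]
              congr 1
              ring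
          _ ≤ t ^ p * (1/2) := by
              have : ((1:ℝ)/2) ^ p ≤ (1/2 : ℝ) ^ (1:ℝ) :=
                Real.rpow_le_rpow_of_exponent_ge (by norm_num) (by norm_num) (by linarith)
              rw [Real.rpow_one] at this
              exact mul_le_mul_of_nonneg_left this htp.le
          _ = t ^ p / 2 := by ring
      calc lam ^ p * ({i : ℕ | lam < |x i|}.ncard : ℝ)
          ≤ 2 ^ p * (lam/2) ^ p * (({i : ℕ | lam/2 < |y i|}.ncard : ℝ) +
            ({i : ℕ | lam/2 < |(x - y : lp (fun _ : ℕ => ℝ) (ENNReal.ofReal p)) i|}.ncard : ℝ)) := by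
            rw [← hlamp]
            exact mul_le_mul_of_nonneg_left hcount (by positivity)
        _ = 2 ^ p * ((lam/2) ^ p * ({i : ℕ | lam/2 < |y i|}.ncard : ℝ)) +
            2 ^ p * ((lam/2) ^ p *
              ({i : ℕ | lam/2 < |(x - y : lp (fun _ : ℕ => ℝ) (ENNReal.ofReal p)) i|}.ncard : ℝ)) := by
            ring
        _ ≤ 2 ^ p * (4 / ((k:ℝ) + 4)) + 2 ^ p * (2 * σ) ^ p := by
            apply add_le_add
            · exact mul_le_mul_of_nonneg_left hb1 h2p.le
            · exact mul_le_mul_of_nonneg_left hb2 h2p.le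
        _ ≤ t ^ p / 4 + t ^ p / 2 := add_le_add hkbound hσt
        _ < t ^ p := by linarith
    have hfinx : ∀ lam : ℝ, 0 < lam → {i : ℕ | lam < |x i|}.Finite :=
      fun lam hlam => finite_D p hp x lam hlam
    have hw : weakNorm p (⇑x) ≤ t :=
      weakNorm_le p hp (⇑x) t ht (fun lam hlam => ⟨hfinx lam hlam, hxD lam hlam⟩)
    exact ⟨weakNorm p (⇑x), ⟨x, hxZ, hx1, rfl⟩, hw⟩
  -- conclude
  have hne : S.Nonempty := by
    obtain ⟨r, hr, _⟩ := hmain 1 one_pos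
    exact ⟨r, hr⟩
  have hbdd : BddBelow S := by
    refine ⟨0, fun r hr => ?_⟩
    obtain ⟨x, _, _, hwx⟩ := hr
    rw [← hwx]
    exact weakNorm_nonneg p _
  have hlow : 0 ≤ sInf S := le_csInf hne (fun r hr => by
    obtain ⟨x, _, _, hwx⟩ := hr
    rw [← hwx]
    exact weakNorm_nonneg p _)
  have hup : sInf S ≤ 0 := by
    by_contra hcon
    push_neg at hcon
    obtain ⟨r, hrS, hrle⟩ := hmain (sInf S / 2) (by linarith)
    have := csInf_le hbdd hrS
    linarith
  linarith
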